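/- Let G be a finite thin 2-qBMG. If an automorphism g of G fixes a vertex v, then g fixes every vertex in the in-neighborhood N⁻(v) of v. -/
import Mathlib


/-- Two vertices are equivalent (`x ∼̇ y`) if they have the same
out-neighbors and the same in-neighbors. -/
def dotSim {V : Type*} (E : V → V → Prop) (x y : V) : Prop :=
  (∀ z, E x z ↔ E y z) ∧ (∀ z, E z x ↔ E z y)

/-- `U` and `W` are the color classes of a 2-colored digraph with edge relation `E`:
they partition the vertex set and every edge has one endpoint in each class. -/
def IsTwoColored {V : Type*} (E : V → V → Prop) (U W : Set V) : Prop :=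
  (∀ v, v ∈ U ∨ v ∈ W) ∧ (∀ v, ¬(v ∈ U ∧ v ∈ W)) ∧
    ∀ u v, E u v → (u ∈ U ∧ v ∈ W) ∨ (u ∈ W ∧ v ∈ U)

/-- Axiom (N1). -/
def AxN1 {V : Type*} (E : V → V → Prop) : Prop :=
  ∀ u v, u ≠ v → ¬E u v → ¬E v u → ∀ w t, ¬(E u t ∧ E v w ∧ E t w)

/-- Axiom (N2): bi-transitivity. -/
def AxN2 {V : Type*} (E : V → V → Prop) : Prop :=
  ∀ u v w t, E u v → E v w → E w t → E u t

/-- Axiom (N3). -/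
def AxN3 {V : Type*} (E : V → V → Prop) : Prop :=
  ∀ u v w, E u w → E v w → (∀ z, E u z → E v z) ∨ (∀ z, E v z → E u z)

/-- A 2-qBMG: an irreflexive 2-colored digraph satisfying (N1), (N2), (N3). -/
def IsQBMG {V : Type*} (E : V → V → Prop) (U W : Set V) : Prop :=
  (∀ v, ¬E v v) ∧ IsTwoColored E U W ∧ AxN1 E ∧ AxN2 E ∧ AxN3 E

/-- An automorphism of the digraph: a permutation mapping edges to edges. -/
def IsAut {V : Type*} (E : V → V → Prop) (π : Equiv.Perm V) : Prop :=
  ∀ u v, E u v → E (π u) (π v)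

/-- A color-preserving automorphism of the 2-colored digraph. -/
def IsAutI {V : Type*} (E : V → V → Prop) (U W : Set V) (π : Equiv.Perm V) : Prop :=
  IsAut E π ∧ (∀ v ∈ U, π v ∈ U) ∧ (∀ v ∈ W, π v ∈ W)

/-- Let `G` be a finite thin 2-qBMG.  If an automorphism `g` of `G`
fixes a vertex `v`, then `g` fixes every vertex in the in-neighborhood `N⁻(v)`. -/
theorem stmt_10 {V : Type*} [Fintype V] [DecidableEq V] (E : V → V → Prop) (U W : Set V)
    (hG : IsQBMG E U W) (hthin : ∀ x y, dotSim E x y → x = y)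
    (g : Equiv.Perm V) (hg : IsAut E g) (v : V) (hv : g v = v) :
    ∀ u, E u v → g u = u := by
  classical
  obtain ⟨hirr, ⟨hUW, hdisj, hedge⟩, hN1, hN2, hN3⟩ := hG
  -- edges are preserved both ways by g
  have hk : ∀ (k : ℕ) (x y : V), E x y → E ((g ^ k) x) ((g ^ k) y) := by
    intro k
    induction k with
    | zero => simp
    | succ n ih =>
      intro x y h
      have := hg _ _ (ih x y h)
      simpa [pow_succ', Equiv.Perm.mul_apply] using this
  have hiff : ∀ x y, E x y ↔ E (g x) (g y) := by
    intro x y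
    constructor
    · exact hg x y
    · intro h
      have hn : 0 < orderOf g := orderOf_pos g
      have := hk (orderOf g - 1) _ _ h
      have hcalc : ∀ z : V, (g ^ (orderOf g - 1)) (g z) = z := by
        intro z
        have : (g ^ (orderOf g - 1)) (g z) = ((g ^ (orderOf g - 1)) * g) z := rfl
        rw [this, ← pow_succ, Nat.sub_add_cancel hn, pow_orderOf_eq_one]
        rfl
      rwa [hcalc, hcalc] at this
  -- two in-neighbors of a common head are never joined by an edge
  have hcol : ∀ a b c, E a c → E b c → ¬E a b := by
    intro a b c h1 h2 hab
    have e1 := hedge a c h1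
    have e2 := hedge b c h2
    have e3 := hedge a b hab
    have d1 := hdisj a; have d2 := hdisj b; have d3 := hdisj c
    tauto
  intro u huv
  by_contra hne
  set u' := g u with hu'
  have hu'v : E u' v := by
    have := hg u v huv
    rwa [hv] at this
  have hneq : u ≠ u' := fun h => hne h.symm
  have hnoedge2 : ¬E u' u := hcol u' u v hu'v huv
  -- out-neighborhood finsets
  set A : Finset V := Finset.univ.filter (fun z => E u z) with hA
  set B : Finset V := Finset.univ.filter (fun z => E u' z) with hB
  have hBimg : B = A.image g := by
    ext z
    simp only [hA, hB, Finset.mem_image, Finset.mem_filter, Finset.mem_univ, true_and]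
    constructor
    · intro h
      refine ⟨g⁻¹ z, ?_, by simp⟩
      rw [hiff]
      simpa using h
    · rintro ⟨a, ha, rfl⟩
      exact hg u a ha
  have hABcard : A.card = B.card := by
    rw [hBimg, Finset.card_image_of_injective _ g.injective]
  have hABeq : A = B := by
    rcases hN3 u u' v huv hu'v with h | h
    · apply Finset.eq_of_subset_of_card_le _ hABcard.ge
      intro z hz
      simp only [hA, hB, Finset.mem_filter, Finset.mem_univ, true_and] at *
      exact h z hz
    · refine (Finset.eq_of_subset_of_card_le ?_ hABcard.le).symm
      intro z hz
      simp only [hA, hB, Finset.mem_filter, Finset.mem_univ, true_and] at *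
      exact h z hz
  have hout : ∀ z, E u z ↔ E u' z := by
    intro z
    have := Finset.ext_iff.mp hABeq z
    simpa [hA, hB] using this
  -- in-neighborhood finsets
  set S : Finset V := Finset.univ.filter (fun z => E z u) with hS
  set T : Finset V := Finset.univ.filter (fun z => E z u') with hT
  have hTimg : T = S.image g := by
    ext z
    simp only [hS, hT, Finset.mem_image, Finset.mem_filter, Finset.mem_univ, true_and]
    constructor
    · intro h
      refine ⟨g⁻¹ z, ?_, by simp⟩
      rw [hiff]
      simpa using h
    · rintro ⟨a, ha, rfl⟩
      exact hg a u ha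
  have hSTcard : S.card = T.card := by
    rw [hTimg, Finset.card_image_of_injective _ g.injective]
  by_cases hST : S = T
  · -- in-neighborhoods equal: u and u' are equivalent, contradicting thinness
    have hin : ∀ z, E z u ↔ E z u' := by
      intro z
      have := Finset.ext_iff.mp hST z
      simpa [hS, hT] using this
    exact hneq (hthin u u' ⟨hout, hin⟩)
  · -- pick witnesses in both differences
    have hnotST : ¬S ⊆ T := by
      intro h
      exact hST (Finset.eq_of_subset_of_card_le h hSTcard.ge)
    have hnotTS : ¬T ⊆ S := by
      intro h
      exact hST (Finset.eq_of_subset_of_card_le h hSTcard.le).symm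
    obtain ⟨w, hwS, hwT⟩ := Finset.not_subset.mp hnotST
    obtain ⟨w₂, hw2T, hw2S⟩ := Finset.not_subset.mp hnotTS
    simp only [hS, hT, Finset.mem_filter, Finset.mem_univ, true_and] at hwS hwT hw2T hw2S
    -- hwS : E w u, hwT : ¬E w u', hw2T : E w₂ u', hw2S : ¬E w₂ u
    have hwu' : w ≠ u' := fun h => hnoedge2 (h ▸ hwS)
    have hEu'w : E u' w := by
      by_contra hn
      exact hN1 w u' hwu' hwT hn v u ⟨hwS, hu'v, huv⟩
    exact hw2S (hN2 w₂ u' w u hw2T hEu'w hwS)
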